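/- arXiv:2102.11465 — 2 statements merged into one kernel-verified Lean document; each statement's English description precedes it below -/
import Mathlib

section
/- Let θ > 1, ν₀, μ₀, ν ∈ (0,1), n ≥ 1 an integer, and η ∈ (0,1). Suppose μ : (0,1) → [0, μ₀] is a function satisfying: μ(q) ≥ μ₀ for q ∈ [q₀, 1), and for all 0 < q' < q'' < 1 with (1+θ)q' ≥ 2q'', μ(q') ≥ min(μ₀, ν₀ μ(q''), μ₀ ν ηⁿ (q'' - q')ⁿ). Then there exist γ ∈ (0,1) and N > 0, depending only on θ, ν₀, μ₀, ν, η, n, q₀, such that μ(q) ≥ N⁻¹ q^{1/γ} for all q ∈ (0,1). -/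
/-- Abstract iteration scheme (3.11): if `μ(q) ≥ μ₀` for `q ∈ [q₀,1)` and
`μ(q') ≥ min(μ₀, ν₀ μ(q''), μ₀ ν ηⁿ (q''-q')ⁿ)` whenever `(1+θ)q' ≥ 2q''`,
then `μ(q) ≥ N⁻¹ q^{1/γ}` on `(0,1)` for some `γ ∈ (0,1)`, `N > 0` depending only
on `θ, ν₀, μ₀, ν, η, n, q₀`. -/
theorem stmt_11 (θ : ℝ) (hθ : 1 < θ) (ν₀ μ₀ ν η : ℝ)
    (hν₀ : ν₀ ∈ Set.Ioo (0 : ℝ) 1) (hμ₀ : μ₀ ∈ Set.Ioo (0 : ℝ) 1)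
    (hν : ν ∈ Set.Ioo (0 : ℝ) 1) (hη : η ∈ Set.Ioo (0 : ℝ) 1)
    (n : ℕ) (hn : 1 ≤ n) (q₀ : ℝ) (hq₀ : q₀ ∈ Set.Ioo (0 : ℝ) 1)
    (μ : ℝ → ℝ)
    (hrange : ∀ q ∈ Set.Ioo (0 : ℝ) 1, μ q ∈ Set.Icc (0 : ℝ) μ₀)
    (hbig : ∀ q ∈ Set.Ico q₀ (1 : ℝ), μ₀ ≤ μ q)
    (hiter : ∀ q' q'' : ℝ, 0 < q' → q' < q'' → q'' < 1 → (1 + θ) * q' ≥ 2 * q'' →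
      μ q' ≥ min (min μ₀ (ν₀ * μ q'')) (μ₀ * ν * η ^ n * (q'' - q') ^ n)) :
    ∃ γ ∈ Set.Ioo (0 : ℝ) 1, ∃ N : ℝ, 0 < N ∧
      ∀ q ∈ Set.Ioo (0 : ℝ) 1, μ q ≥ N⁻¹ * q ^ (1 / γ) := by
  classical
  obtain ⟨hν₀0, hν₀1⟩ := hν₀
  obtain ⟨hμ₀0, hμ₀1⟩ := hμ₀
  obtain ⟨hν0, hν1⟩ := hν
  obtain ⟨hη0, hη1⟩ := hη
  obtain ⟨hq₀0, hq₀1⟩ := hq₀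
  have hθ0 : (0:ℝ) < 1 + θ := by linarith
  set r : ℝ := 2 / (1 + θ) with hr_def
  have hr0 : 0 < r := by positivity
  have hr1 : r < 1 := by rw [hr_def, div_lt_one hθ0]; linarith
  set δ : ℝ := min (q₀ * (1 - r)) ((1 - q₀) / 2) with hδ_def
  have hδ0 : 0 < δ := lt_min (by nlinarith) (by linarith)
  set c : ℝ := min μ₀ (μ₀ * ν * η ^ n * δ ^ n) with hc_def
  have hc0 : 0 < c := lt_min hμ₀0 (by positivity)
  have hcμ₀ : c ≤ μ₀ := min_le_left _ _
  set ρ : ℝ := min ν₀ (r ^ n) with hρ_def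
  have hρ0 : 0 < ρ := lt_min hν₀0 (by positivity)
  have hρ1 : ρ < 1 := lt_of_le_of_lt (min_le_left _ _) hν₀1
  -- key induction: μ(q) ≥ c ρ^k whenever r^k q₀ ≤ q < 1
  have key : ∀ k : ℕ, ∀ q : ℝ, r ^ k * q₀ ≤ q → q < 1 → c * ρ ^ k ≤ μ q := by
    intro k
    induction k with
    | zero =>
      intro q h1 h2
      simp only [pow_zero, one_mul, mul_one] at h1 ⊢
      exact le_trans hcμ₀ (hbig q ⟨h1, h2⟩)
    | succ k ih =>
      intro q h1 h2
      have hrk1 : (0:ℝ) < r ^ (k + 1) * q₀ := by positivity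
      have hq0 : 0 < q := lt_of_lt_of_le hrk1 h1
      have hρk_le : ρ ^ (k + 1) ≤ ρ ^ k :=
        pow_le_pow_of_le_one hρ0.le hρ1.le (Nat.le_succ k)
      by_cases hcase : r ^ k * q₀ ≤ q
      · exact le_trans (mul_le_mul_of_nonneg_left hρk_le hc0.le) (ih q hcase h2)
      · push_neg at hcase
        have hrkle1 : r ^ k ≤ 1 := pow_le_one₀ hr0.le hr1.le
        have hqq₀ : q < q₀ := lt_of_lt_of_le hcase (by nlinarith)
        set q'' : ℝ := min (q / r) ((1 + q₀) / 2) with hq''_def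
        have hq''lt1 : q'' < 1 := lt_of_le_of_lt (min_le_right _ _) (by linarith)
        have hqlt : q < q'' := by
          apply lt_min
          · rw [lt_div_iff₀ hr0]; nlinarith
          · linarith
        have hdivr : q / r = q * (1 + θ) / 2 := by
          rw [hr_def, div_div_eq_mul_div]
        have hconstraint : (1 + θ) * q ≥ 2 * q'' := by
          have hle : q'' ≤ q / r := min_le_left _ _
          rw [hdivr] at hle
          linarith
        have hq''ge : r ^ k * q₀ ≤ q'' := by
          apply le_min
          · rw [le_div_iff₀ hr0]
            calc r ^ k * q₀ * r = r ^ (k + 1) * q₀ := by ring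
              _ ≤ q := h1
          · nlinarith
        have hμq'' := ih q'' hq''ge hq''lt1
        have hδle1 : δ ≤ q₀ * (1 - r) := min_le_left _ _
        have hδle2 : δ ≤ (1 - q₀) / 2 := min_le_right _ _
        have hgap : r ^ k * δ ≤ q'' - q := by
          rcases le_total (q / r) ((1 + q₀) / 2) with h | h
          · have he : q'' = q / r := min_eq_left h
            have hqr : q / r - q = q * (1 - r) / r := by
              field_simp
            rw [he, hqr, le_div_iff₀ hr0]
            have e1 : r ^ k * δ * r ≤ r ^ k * (q₀ * (1 - r)) * r :=
              mul_le_mul_of_nonneg_right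
                (mul_le_mul_of_nonneg_left hδle1 (by positivity)) hr0.le
            have e2 : r ^ k * (q₀ * (1 - r)) * r = r ^ (k + 1) * q₀ * (1 - r) := by
              ring
            have e3 : r ^ (k + 1) * q₀ * (1 - r) ≤ q * (1 - r) :=
              mul_le_mul_of_nonneg_right h1 (by linarith)
            linarith
          · have he : q'' = (1 + q₀) / 2 := min_eq_right h
            rw [he]
            have e1 : r ^ k * δ ≤ 1 * δ :=
              mul_le_mul_of_nonneg_right hrkle1 hδ0.le
            rw [one_mul] at e1
            linarith
        have hit := hiter q q'' hq0 hqlt hq''lt1 hconstraint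
        refine le_trans (le_min (le_min ?_ ?_) ?_) hit
        · have h1' : ρ ^ (k + 1) ≤ 1 := pow_le_one₀ hρ0.le hρ1.le
          calc c * ρ ^ (k + 1) ≤ c * 1 := mul_le_mul_of_nonneg_left h1' hc0.le
            _ = c := mul_one c
            _ ≤ μ₀ := hcμ₀
        · have h0 : (0:ℝ) ≤ c * ρ ^ k := by positivity
          calc c * ρ ^ (k + 1) = ρ * (c * ρ ^ k) := by ring
            _ ≤ ν₀ * (c * ρ ^ k) :=
              mul_le_mul_of_nonneg_right (min_le_left _ _) h0
            _ ≤ ν₀ * μ q'' := mul_le_mul_of_nonneg_left hμq'' hν₀0.le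
        · have hA : c ≤ μ₀ * ν * η ^ n * δ ^ n := min_le_right _ _
          have hB : ρ ^ k ≤ (r ^ k) ^ n := by
            calc ρ ^ k ≤ (r ^ n) ^ k := pow_le_pow_left₀ hρ0.le (min_le_right _ _) k
              _ = (r ^ k) ^ n := by rw [← pow_mul, ← pow_mul, Nat.mul_comm]
          calc c * ρ ^ (k + 1) ≤ c * ρ ^ k :=
              mul_le_mul_of_nonneg_left hρk_le hc0.le
            _ ≤ (μ₀ * ν * η ^ n * δ ^ n) * (r ^ k) ^ n :=
              mul_le_mul hA hB (by positivity) (by positivity)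
            _ = μ₀ * ν * η ^ n * (r ^ k * δ) ^ n := by
              rw [mul_pow]; ring
            _ ≤ μ₀ * ν * η ^ n * (q'' - q) ^ n :=
              mul_le_mul_of_nonneg_left
                (pow_le_pow_left₀ (by positivity) hgap n) (by positivity)
  -- the exponent
  set α : ℝ := Real.log ρ / Real.log r with hα_def
  have hlogr : Real.log r < 0 := Real.log_neg hr0 hr1
  have hlogρ : Real.log ρ < 0 := Real.log_neg hρ0 hρ1
  have hα0 : 0 < α := div_pos_of_neg_of_neg hlogρ hlogr
  have hρ_eq : r ^ α = ρ := by
    rw [Real.rpow_def_of_pos hr0, hα_def, mul_div_cancel₀ _ (ne_of_lt hlogr),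
      Real.exp_log hρ0]
  set β : ℝ := max α 2 with hβ_def
  have hβ2 : (2:ℝ) ≤ β := le_max_right _ _
  have hβ0 : 0 < β := by linarith
  refine ⟨β⁻¹, ⟨by positivity, inv_lt_one_of_one_lt₀ (by linarith)⟩,
    (min c (c * (r / q₀) ^ α))⁻¹, ?_, ?_⟩
  · have : 0 < c * (r / q₀) ^ α := by positivity
    positivity
  · intro q ⟨hq0, hq1⟩
    rw [one_div, inv_inv, inv_inv]
    have hqβ : q ^ β ≤ 1 := Real.rpow_le_one hq0.le hq1.le hβ0.le
    have hqβ0 : 0 < q ^ β := Real.rpow_pos_of_pos hq0 β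
    have hex : ∃ k : ℕ, r ^ k * q₀ ≤ q := by
      obtain ⟨k, hk⟩ := exists_pow_lt_of_lt_one (div_pos hq0 hq₀0) hr1
      exact ⟨k, by rw [← le_div_iff₀ hq₀0]; exact hk.le⟩
    set k := Nat.find hex with hk_def
    have hk := Nat.find_spec hex
    have hkey := key k q hk hq1
    rw [ge_iff_le]
    rcases Nat.eq_zero_or_pos k with hk0 | hkpos
    · rw [hk0] at hkey
      simp only [pow_zero, mul_one] at hkey
      calc min c (c * (r / q₀) ^ α) * q ^ β ≤ c * 1 :=
          mul_le_mul (min_le_left _ _) hqβ hqβ0.le hc0.le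
        _ = c := mul_one c
        _ ≤ μ q := hkey
    · obtain ⟨j, hj⟩ : ∃ j, k = j + 1 := ⟨k - 1, (Nat.succ_pred_eq_of_pos hkpos).symm⟩
      have hjmin : ¬ (r ^ j * q₀ ≤ q) := Nat.find_min hex (by omega)
      push_neg at hjmin
      have hrk_lb : r * q / q₀ ≤ r ^ k := by
        rw [hj, pow_succ, div_le_iff₀ hq₀0]
        calc r * q ≤ r * (r ^ j * q₀) := mul_le_mul_of_nonneg_left hjmin.le hr0.le
          _ = r ^ j * r * q₀ := by ring
      have hrpow : ((r : ℝ) ^ k) ^ α = ρ ^ k := by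
        rw [← Real.rpow_natCast r k, ← Real.rpow_mul hr0.le, mul_comm,
          Real.rpow_mul hr0.le, hρ_eq, Real.rpow_natCast]
      have h3 : (r / q₀ * q) ^ α ≤ (r ^ k : ℝ) ^ α := by
        apply Real.rpow_le_rpow (by positivity) _ hα0.le
        calc r / q₀ * q = r * q / q₀ := by ring
          _ ≤ r ^ k := hrk_lb
      have h4 : (r / q₀ * q) ^ α = (r / q₀) ^ α * q ^ α :=
        Real.mul_rpow (by positivity) hq0.le
      have h5 : q ^ β ≤ q ^ α :=
        Real.rpow_le_rpow_of_exponent_ge hq0 hq1.le (le_max_left α 2)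
      have h6 : 0 < (r / q₀) ^ α := Real.rpow_pos_of_pos (by positivity) α
      calc min c (c * (r / q₀) ^ α) * q ^ β
          ≤ (c * (r / q₀) ^ α) * q ^ α :=
            mul_le_mul (min_le_right _ _) h5 hqβ0.le (by positivity)
        _ = c * ((r / q₀) ^ α * q ^ α) := by ring
        _ ≤ c * ρ ^ k := by
            rw [← h4, ← hrpow]
            exact mul_le_mul_of_nonneg_left h3 hc0.le
        _ ≤ μ q := hkey
end

section
/- Let μ > 0. Suppose G is a nonnegative measure-like functional on Borel subsets Γ of a cylinder C of finite Lebesgue measure |C|, satisfying: G(Γ) ≥ N₁⁻¹ (|Γ|/|C|)^μ R² whenever |Γ| > 0 (for constants N₁, R > 0), and G(Γ) = ∫_Γ g dλ for some nonnegative measurable density g with respect to Lebesgue measure λ. Then for any Borel nonnegative f vanishing outside C, ∫_C f^{1/(2μ)} dλ ≤ N |C| (R^{-2} ∫_C f g dλ)^{1/(2μ)} for a constant N depending only on μ and N₁. -/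
open MeasureTheory
open scoped ENNReal

/-- Abstract layer-cake form of Corollary 3.7: if `G(Γ) = ∫_Γ g` satisfies the
power lower bound `G(Γ) ≥ N₁⁻¹ (|Γ|/|C|)^μ R²` for measurable `Γ ⊆ C` of positive
measure, then for every nonnegative `f` vanishing outside `C`,
`∫_C f^{1/(2μ)} ≤ N |C| (R⁻² ∫_C f g)^{1/(2μ)}` with `N` depending only on `μ, N₁`. -/
theorem stmt_12 (μ N₁ : ℝ) (hμ : 0 < μ) (hN₁ : 0 < N₁) :
    ∃ N : ℝ, 0 < N ∧
      ∀ (α : Type) (_ : MeasurableSpace α) (lam : Measure α) (C : Set α)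
        (_ : MeasurableSet C) (_ : 0 < lam C) (_ : lam C < ⊤)
        (R : ℝ) (_ : 0 < R) (g : α → ℝ≥0∞) (_ : Measurable g)
        (_ : ∀ Γ : Set α, MeasurableSet Γ → Γ ⊆ C → 0 < lam Γ →
          ENNReal.ofReal (N₁⁻¹ * ((lam Γ).toReal / (lam C).toReal) ^ μ * R ^ 2)
            ≤ ∫⁻ x in Γ, g x ∂lam)
        (f : α → ℝ≥0∞) (_ : Measurable f) (_ : ∀ x ∉ C, f x = 0),
        ∫⁻ x in C, f x ^ (1 / (2 * μ)) ∂lam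
          ≤ ENNReal.ofReal N * lam C *
            (ENNReal.ofReal (R ^ 2)⁻¹ * ∫⁻ x in C, f x * g x ∂lam) ^ (1 / (2 * μ)) := by
  classical
  set q : ℝ := 1 / (2 * μ) with hq_def
  have hq : 0 < q := by positivity
  refine ⟨2 * N₁ ^ q, by positivity, ?_⟩
  intro α mα lam C hC hC0 hCtop R hR g hg hlow f hf hf0
  set I : ℝ≥0∞ := ∫⁻ x in C, f x * g x ∂lam with hI_def
  have hR2 : (0:ℝ) < R ^ 2 := by positivity
  -- Case: I = ∞, RHS is infinite
  rcases eq_or_ne I ⊤ with hItop | hItop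
  · have h1 : ENNReal.ofReal (R ^ 2)⁻¹ * I = ⊤ := by
      rw [hItop, ENNReal.mul_top]
      simp only [ne_eq, ENNReal.ofReal_eq_zero, not_le]
      positivity
    rw [h1, ENNReal.top_rpow_of_pos hq, ENNReal.mul_top]
    · exact le_top
    · refine mul_ne_zero ?_ hC0.ne'
      simp only [ne_eq, ENNReal.ofReal_eq_zero, not_le]
      positivity
  -- Now I < ∞.
  set c : ℝ := (lam C).toReal with hc_def
  have hc : 0 < c := ENNReal.toReal_pos hC0.ne' hCtop.ne
  set A : ℝ := (R ^ 2)⁻¹ * I.toReal with hA_def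
  have hA0 : 0 ≤ A := by
    have := ENNReal.toReal_nonneg (a := I)
    positivity
  set B : ℝ := (N₁ * A) ^ μ⁻¹ with hB_def
  have hB0 : 0 ≤ B := Real.rpow_nonneg (by positivity) _
  -- f is a.e. finite on C
  have hflt : lam (C ∩ f ⁻¹' {⊤}) = 0 := by
    by_contra hpos
    have hΓm : MeasurableSet (C ∩ f ⁻¹' {⊤}) := hC.inter (hf (measurableSet_singleton _))
    have hpos' : 0 < lam (C ∩ f ⁻¹' {⊤}) := pos_iff_ne_zero.mpr hpos
    have hGpos : 0 < ∫⁻ x in C ∩ f ⁻¹' {⊤}, g x ∂lam := by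
      refine lt_of_lt_of_le ?_ (hlow _ hΓm Set.inter_subset_left hpos')
      have hm : 0 < (lam (C ∩ f ⁻¹' {⊤})).toReal :=
        ENNReal.toReal_pos hpos'.ne' (lt_of_le_of_lt (measure_mono Set.inter_subset_left) hCtop).ne
      simp only [ENNReal.ofReal_pos]
      positivity
    have htop : ∫⁻ x in C ∩ f ⁻¹' {⊤}, f x * g x ∂lam = ⊤ := by
      have : ∫⁻ x in C ∩ f ⁻¹' {⊤}, f x * g x ∂lam = ∫⁻ x in C ∩ f ⁻¹' {⊤}, ⊤ * g x ∂lam := by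
        refine setLIntegral_congr_fun hΓm ?_
        intro x hx
        simp only
        rw [hx.2]
      rw [this, lintegral_const_mul ⊤ hg, ENNReal.top_mul hGpos.ne']
    exact hItop (top_le_iff.mp (htop ▸ lintegral_mono_set Set.inter_subset_left))
  have hfin : ∀ᵐ x ∂lam.restrict C, f x ≠ ⊤ := by
    rw [ae_restrict_iff' hC]
    rw [ae_iff]
    refine measure_mono_null ?_ hflt
    intro x hx
    simp only [Set.mem_setOf_eq, not_forall, Classical.not_imp, not_not] at hx
    exact ⟨hx.1, hx.2⟩
  -- the real-valued version of f^q
  set h : α → ℝ := fun x => ((f x) ^ q).toReal with hh_def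
  have hh_mble : Measurable h := (hf.pow_const q).ennreal_toReal
  -- Step 1: rewrite the LHS
  have step1 : ∫⁻ x in C, f x ^ q ∂lam = ∫⁻ x, ENNReal.ofReal (h x) ∂(lam.restrict C) := by
    refine lintegral_congr_ae ?_
    filter_upwards [hfin] with x hx
    rw [hh_def, ENNReal.ofReal_toReal (ENNReal.rpow_ne_top_of_nonneg hq.le hx)]
  -- Step 2: layer cake
  have step2 : ∫⁻ x, ENNReal.ofReal (h x) ∂(lam.restrict C)
      = ∫⁻ t in Set.Ioi (0:ℝ), (lam.restrict C) {a | t < h a} := by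
    exact lintegral_eq_lintegral_meas_lt (lam.restrict C)
      (Filter.Eventually.of_forall fun x => ENNReal.toReal_nonneg) hh_mble.aemeasurable
  -- Key level-set estimate
  have key : ∀ t : ℝ, 0 < t →
      lam (C ∩ f ⁻¹' Set.Ioi (ENNReal.ofReal (t ^ (2*μ)))) ≤ ENNReal.ofReal (c * B / t ^ 2) := by
    intro t ht
    set Γ : Set α := C ∩ f ⁻¹' Set.Ioi (ENNReal.ofReal (t ^ (2*μ))) with hΓ_def
    have hΓm : MeasurableSet Γ := hC.inter (hf measurableSet_Ioi)
    have hΓC : lam Γ ≤ lam C := measure_mono Set.inter_subset_left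
    rcases eq_or_lt_of_le (zero_le : 0 ≤ lam Γ) with hz | hpos
    · rw [← hz]; exact zero_le
    set m : ℝ := (lam Γ).toReal with hm_def
    have hΓtop : lam Γ ≠ ⊤ := (lt_of_le_of_lt hΓC hCtop).ne
    have hm : 0 < m := ENNReal.toReal_pos hpos.ne' hΓtop
    have ht2μ : 0 < t ^ (2*μ) := Real.rpow_pos_of_pos ht _
    set L : ℝ := N₁⁻¹ * (m / c) ^ μ * R ^ 2 with hL_def
    have hL : 0 < L := by
      have : 0 < (m / c) ^ μ := Real.rpow_pos_of_pos (by positivity) _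
      positivity
    have hlowΓ : ENNReal.ofReal L ≤ ∫⁻ x in Γ, g x ∂lam := hlow Γ hΓm Set.inter_subset_left hpos
    -- s * ∫_Γ g ≤ I
    have hsG : ENNReal.ofReal (t ^ (2*μ)) * ∫⁻ x in Γ, g x ∂lam ≤ I := by
      rw [← lintegral_const_mul _ hg]
      calc ∫⁻ x in Γ, ENNReal.ofReal (t ^ (2*μ)) * g x ∂lam
          ≤ ∫⁻ x in Γ, f x * g x ∂lam := by
            refine setLIntegral_mono (hf.mul hg) ?_
            intro x hx
            exact mul_le_mul_left (le_of_lt hx.2) _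
        _ ≤ I := lintegral_mono_set Set.inter_subset_left
    have hLI : ENNReal.ofReal (L * t ^ (2*μ)) ≤ I := by
      rw [ENNReal.ofReal_mul hL.le]
      calc ENNReal.ofReal L * ENNReal.ofReal (t ^ (2*μ))
          ≤ (∫⁻ x in Γ, g x ∂lam) * ENNReal.ofReal (t ^ (2*μ)) :=
            mul_le_mul_left hlowΓ _
        _ = ENNReal.ofReal (t ^ (2*μ)) * ∫⁻ x in Γ, g x ∂lam := mul_comm _ _
        _ ≤ I := hsG
    have hreal : L * t ^ (2*μ) ≤ I.toReal :=
      (ENNReal.ofReal_le_iff_le_toReal hItop).mp hLI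
    -- (m/c)^μ ≤ N₁ * A / t^(2μ)
    have h1 : (m / c) ^ μ ≤ N₁ * A / t ^ (2*μ) := by
      rw [le_div_iff₀ ht2μ]
      have h2 : (m / c) ^ μ * t ^ (2*μ) = N₁ * (R^2)⁻¹ * (L * t ^ (2*μ)) := by
        rw [hL_def]; field_simp
      rw [h2, hA_def]
      calc N₁ * (R^2)⁻¹ * (L * t ^ (2*μ)) ≤ N₁ * (R^2)⁻¹ * I.toReal := by
            apply mul_le_mul_of_nonneg_left hreal (by positivity)
        _ = N₁ * ((R ^ 2)⁻¹ * I.toReal) := by ring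
    -- m/c ≤ B / t^2
    have h3 : m / c ≤ B / t ^ 2 := by
      have hmc : (0:ℝ) ≤ m / c := by positivity
      have hmono := Real.rpow_le_rpow (Real.rpow_nonneg hmc μ) h1 (inv_pos.mpr hμ).le
      have e1 : ((m / c) ^ μ) ^ μ⁻¹ = m / c := by
        rw [← Real.rpow_mul hmc, mul_inv_cancel₀ hμ.ne', Real.rpow_one]
      have e2 : (N₁ * A / t ^ (2*μ)) ^ μ⁻¹ = B / t ^ 2 := by
        rw [Real.div_rpow (by positivity) ht2μ.le, ← Real.rpow_mul ht.le,
          show (2*μ) * μ⁻¹ = (2:ℝ) by field_simp, Real.rpow_two, ← hB_def]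
      rw [e1, e2] at hmono
      exact hmono
    have h4 : m ≤ c * B / t ^ 2 := by
      rw [div_le_iff₀ hc] at h3
      calc m ≤ B / t ^ 2 * c := h3
        _ = c * B / t ^ 2 := by ring
    calc lam Γ = ENNReal.ofReal m := (ENNReal.ofReal_toReal hΓtop).symm
      _ ≤ ENNReal.ofReal (c * B / t ^ 2) := ENNReal.ofReal_le_ofReal h4
  -- Step 3: pointwise bound of the tail measure
  have step3 : ∫⁻ t in Set.Ioi (0:ℝ), (lam.restrict C) {a | t < h a}
      ≤ ∫⁻ t in Set.Ioi (0:ℝ), min (lam C) (ENNReal.ofReal (c * B / t ^ 2)) := by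
    refine setLIntegral_mono (Measurable.min measurable_const ?_) ?_
    · exact (measurable_const.div ((measurable_id.pow_const 2))).ennreal_ofReal
    · intro t ht
      simp only [Set.mem_Ioi] at ht
      refine le_min ?_ ?_
      · calc (lam.restrict C) {a | t < h a} ≤ (lam.restrict C) Set.univ :=
              measure_mono (Set.subset_univ _)
          _ = lam C := by rw [Measure.restrict_apply_univ]
      · rw [Measure.restrict_apply' hC]
        refine le_trans (measure_mono ?_) (key t ht)
        intro a ha
        obtain ⟨ha1, ha2⟩ := ha
        simp only [Set.mem_setOf_eq] at ha1
        refine ⟨ha2, ?_⟩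
        have hfa_ne : f a ^ q ≠ ⊤ := by
          intro hcon
          rw [hh_def] at ha1
          simp only [hcon, ENNReal.toReal_top] at ha1
          exact absurd ha1 (not_lt.mpr ht.le)
        have hlt : ENNReal.ofReal t < f a ^ q :=
          (ENNReal.ofReal_lt_iff_lt_toReal ht.le hfa_ne).mpr ha1
        have hlt2 : (ENNReal.ofReal t) ^ (2*μ) < (f a ^ q) ^ (2*μ) :=
          ENNReal.rpow_lt_rpow hlt (by positivity)
        rw [← ENNReal.rpow_mul, hq_def, one_div, inv_mul_cancel₀ (by positivity : (2*μ) ≠ 0),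
          ENNReal.rpow_one, ENNReal.ofReal_rpow_of_pos ht] at hlt2
        exact hlt2
    -- Step 4: evaluate the integral of the upper bound
  rcases eq_or_lt_of_le hA0 with hAz | hApos
  · -- A = 0, then B = 0 and the bound is 0
    have hBz : B = 0 := by
      rw [hB_def, ← hAz, mul_zero, Real.zero_rpow (inv_ne_zero hμ.ne')]
    have : ∫⁻ t in Set.Ioi (0:ℝ), min (lam C) (ENNReal.ofReal (c * B / t ^ 2)) = 0 := by
      have : ∀ t : ℝ, min (lam C) (ENNReal.ofReal (c * B / t ^ 2)) = 0 := by
        intro t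
        simp [hBz]
      simp only [this, lintegral_zero]
    calc ∫⁻ x in C, f x ^ q ∂lam ≤ 0 := by rw [step1, step2, ← this]; exact step3
      _ ≤ _ := zero_le
  · -- A > 0
    set T : ℝ := (N₁ * A) ^ q with hT_def
    have hT : 0 < T := Real.rpow_pos_of_pos (by positivity) _
    have hTB : T ^ 2 = B := by
      rw [hT_def, hB_def, ← Real.rpow_natCast ((N₁*A) ^ q) 2, ← Real.rpow_mul (by positivity)]
      congr 1
      rw [hq_def]
      field_simp
      norm_num
    have hsplit : Set.Ioi (0:ℝ) = Set.Ioc 0 T ∪ Set.Ioi T := (Set.Ioc_union_Ioi_eq_Ioi hT.le).symm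
    have part1 : ∫⁻ t in Set.Ioc (0:ℝ) T, min (lam C) (ENNReal.ofReal (c * B / t ^ 2))
        ≤ ENNReal.ofReal (c * T) := by
      calc ∫⁻ t in Set.Ioc (0:ℝ) T, min (lam C) (ENNReal.ofReal (c * B / t ^ 2))
          ≤ ∫⁻ _ in Set.Ioc (0:ℝ) T, lam C := lintegral_mono fun t => min_le_left _ _
        _ = lam C * volume (Set.Ioc (0:ℝ) T) := setLIntegral_const _ _
        _ = ENNReal.ofReal c * ENNReal.ofReal T := by
            rw [Real.volume_Ioc, sub_zero, hc_def, ENNReal.ofReal_toReal hCtop.ne]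
        _ = ENNReal.ofReal (c * T) := (ENNReal.ofReal_mul hc.le).symm
    have part2 : ∫⁻ t in Set.Ioi T, min (lam C) (ENNReal.ofReal (c * B / t ^ 2))
        ≤ ENNReal.ofReal (c * T) := by
      have hInt : IntegrableOn (fun t : ℝ => c * B * t ^ (-2:ℝ)) (Set.Ioi T) := by
        exact (integrableOn_Ioi_rpow_of_lt (by norm_num) hT).const_mul (c * B)
      have hnn : 0 ≤ᵐ[volume.restrict (Set.Ioi T)] fun t : ℝ => c * B * t ^ (-2:ℝ) := by
        refine (ae_restrict_iff' measurableSet_Ioi).mpr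
          (Filter.Eventually.of_forall fun t ht => ?_)
        have h0t : (0:ℝ) < t := lt_trans hT ht
        have : (0:ℝ) ≤ t ^ (-2:ℝ) := (Real.rpow_pos_of_pos h0t _).le
        positivity
      calc ∫⁻ t in Set.Ioi T, min (lam C) (ENNReal.ofReal (c * B / t ^ 2))
          ≤ ∫⁻ t in Set.Ioi T, ENNReal.ofReal (c * B * t ^ (-2:ℝ)) := by
            refine setLIntegral_mono ((measurable_const.mul
              ((measurable_id.pow_const (-2:ℝ)))).ennreal_ofReal) ?_
            intro t ht
            simp only [Set.mem_Ioi] at ht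
            have htpos : (0:ℝ) < t := lt_trans hT ht
            refine le_trans (min_le_right _ _) (le_of_eq ?_)
            congr 1
            rw [Real.rpow_neg htpos.le, ← Real.rpow_natCast t 2]
            push_cast
            rw [div_eq_mul_inv]
        _ = ENNReal.ofReal (∫ t in Set.Ioi T, c * B * t ^ (-2:ℝ)) :=
            (ofReal_integral_eq_lintegral_ofReal hInt hnn).symm
        _ = ENNReal.ofReal (c * T) := by
            congr 1
            rw [MeasureTheory.integral_const_mul, integral_Ioi_rpow_of_lt (by norm_num) hT]
            have : -T ^ (-2 + 1 : ℝ) / (-2 + 1) = T⁻¹ := by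
              norm_num
              rw [Real.rpow_neg_one]
            rw [this, ← hTB]
            field_simp
    -- assemble
    have step4 : ∫⁻ t in Set.Ioi (0:ℝ), min (lam C) (ENNReal.ofReal (c * B / t ^ 2))
        ≤ ENNReal.ofReal (2 * (c * T)) := by
      rw [hsplit, lintegral_union measurableSet_Ioi (Set.Ioc_disjoint_Ioi le_rfl),
        two_mul, ENNReal.ofReal_add (by positivity) (by positivity)]
      exact add_le_add part1 part2
    -- identify the RHS
    have hRHS : ENNReal.ofReal (2 * N₁ ^ q) * lam C * (ENNReal.ofReal (R ^ 2)⁻¹ * I) ^ q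
        = ENNReal.ofReal (2 * (c * T)) := by
      have hI_eq : ENNReal.ofReal (R ^ 2)⁻¹ * I = ENNReal.ofReal A := by
        rw [hA_def, ENNReal.ofReal_mul (by positivity), ENNReal.ofReal_toReal hItop]
      have hlamC : lam C = ENNReal.ofReal c := (ENNReal.ofReal_toReal hCtop.ne).symm
      rw [hI_eq, ENNReal.ofReal_rpow_of_pos hApos, hlamC,
        ← ENNReal.ofReal_mul (by positivity), ← ENNReal.ofReal_mul (by positivity)]
      congr 1
      rw [hT_def, Real.mul_rpow hN₁.le hA0]
      ring
    calc ∫⁻ x in C, f x ^ q ∂lam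
        ≤ ∫⁻ t in Set.Ioi (0:ℝ), min (lam C) (ENNReal.ofReal (c * B / t ^ 2)) := by
          rw [step1, step2]; exact step3
      _ ≤ ENNReal.ofReal (2 * (c * T)) := step4
      _ = _ := hRHS.symm
end
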